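/- Let E be a real Hilbert space, L a closed linear subspace of E, and C a nonempty closed convex cone in E with L ⊆ C. Then for every θ ∈ E, the metric projections satisfy P_C(θ) = P_L(θ) + P_{C ∩ L⊥}(θ), where L⊥ is the orthogonal complement of L and C ∩ L⊥ is itself a nonempty closed convex cone. -/

import Mathlib

open RealInnerProductSpace

private lemma min_iInf {E : Type*} [NormedAddCommGroup E] {K : Set E} {x u : E} (hu : u ∈ K)
    (hmin : ∀ y ∈ K, ‖x - u‖ ≤ ‖x - y‖) : ‖x - u‖ = ⨅ w : K, ‖x - w‖ := by
  haveI : Nonempty K := ⟨⟨u, hu⟩⟩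
  refine le_antisymm (le_ciInf fun w => hmin w w.2) (ciInf_le (f := fun w : K => ‖x - w‖) ⟨0, ?_⟩ ⟨u, hu⟩)
  rintro r ⟨w, rfl⟩
  exact norm_nonneg _

private lemma var_ineq {E : Type*} [NormedAddCommGroup E] [InnerProductSpace ℝ E]
    {K : Set E} (hK : Convex ℝ K) {x u : E} (hu : u ∈ K)
    (hmin : ∀ y ∈ K, ‖x - u‖ ≤ ‖x - y‖) : ∀ y ∈ K, ⟪x - u, y - u⟫ ≤ 0 :=
  (norm_eq_iInf_iff_real_inner_le_zero hK hu).1 (min_iInf hu hmin)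

theorem stmt1 {E : Type*} [NormedAddCommGroup E] [InnerProductSpace ℝ E] [CompleteSpace E]
    (L : Submodule ℝ E) (hLclosed : IsClosed (L : Set E))
    (C : Set E) (hCne : C.Nonempty) (hCclosed : IsClosed C) (hCconv : Convex ℝ C)
    (hCcone : ∀ c ∈ C, ∀ r : ℝ, 0 ≤ r → r • c ∈ C)
    (hLC : (L : Set E) ⊆ C)
    (PL PC PI : E → E)
    (hPL : ∀ x : E, PL x ∈ L ∧ ∀ y ∈ (L : Set E), ‖x - PL x‖ ≤ ‖x - y‖)
    (hPC : ∀ x : E, PC x ∈ C ∧ ∀ y ∈ C, ‖x - PC x‖ ≤ ‖x - y‖)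
    (hPI : ∀ x : E, PI x ∈ C ∩ (Lᗮ : Set E) ∧
      ∀ y ∈ C ∩ (Lᗮ : Set E), ‖x - PI x‖ ≤ ‖x - y‖) :
    ((C ∩ (Lᗮ : Set E)).Nonempty ∧ IsClosed (C ∩ (Lᗮ : Set E)) ∧
      Convex ℝ (C ∩ (Lᗮ : Set E)) ∧
      (∀ c ∈ C ∩ (Lᗮ : Set E), ∀ r : ℝ, 0 ≤ r → r • c ∈ C ∩ (Lᗮ : Set E))) ∧
    ∀ θ : E, PC θ = PL θ + PI θ := by
  -- C + L = C
  have hadd : ∀ c ∈ C, ∀ l ∈ L, c + l ∈ C := by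
    intro c hc l hl
    have hmid : (1/2 : ℝ) • c + (1/2 : ℝ) • l ∈ C :=
      hCconv hc (hLC hl) (by norm_num) (by norm_num) (by norm_num)
    have := hCcone _ hmid 2 (by norm_num)
    convert this using 1
    module
  refine ⟨⟨⟨0, hLC L.zero_mem, Lᗮ.zero_mem⟩,
    hCclosed.inter (Submodule.isClosed_orthogonal L),
    hCconv.inter (Lᗮ.convex),
    fun c hc r hr => ⟨hCcone c hc.1 r hr, Lᗮ.smul_mem r hc.2⟩⟩, ?_⟩
  intro θ
  obtain ⟨hpL, hpLmin⟩ := hPL θ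
  obtain ⟨⟨hmC, hmO⟩, hmmin⟩ := hPI θ
  obtain ⟨hcC, hcmin⟩ := hPC θ
  set p := PL θ
  set m := PI θ
  -- θ - p ∈ Lᗮ
  have hq : θ - p ∈ Lᗮ := by
    rw [Submodule.mem_orthogonal]
    intro w hw
    rw [real_inner_comm]
    exact (Submodule.norm_eq_iInf_iff_real_inner_eq_zero L hpL).1 (min_iInf hpL hpLmin) w hw
  -- variational inequality for PI
  have hIvar : ∀ y ∈ C ∩ (Lᗮ : Set E), ⟪θ - m, y - m⟫ ≤ 0 :=
    var_ineq (hCconv.inter Lᗮ.convex) ⟨hmC, hmO⟩ hmmin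
  -- candidate u = p + m
  have huC : p + m ∈ C := by
    have := hadd m hmC p hpL; rwa [add_comm] at this
  -- variational inequality for u over C
  have huvar : ∀ y ∈ C, ⟪θ - (p + m), y - (p + m)⟫ ≤ 0 := by
    intro y hy
    haveI : CompleteSpace L := hLclosed.completeSpace_coe
    set yL : E := (L.orthogonalProjectionOnto y : E) with hyLdef
    have hyL : yL ∈ L := (L.orthogonalProjectionOnto y).2
    have hyO : y - yL ∈ Lᗮ := L.sub_starProjection_mem_orthogonal y
    have hyC : y - yL ∈ C := by
      have := hadd y hy (-yL) (L.neg_mem hyL)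
      simpa [sub_eq_add_neg] using this
    have hd : θ - (p + m) ∈ Lᗮ := by
      have : θ - (p + m) = (θ - p) - m := by abel
      rw [this]; exact Lᗮ.sub_mem hq hmO
    have key : ⟪θ - (p + m), y - (p + m)⟫
        = ⟪θ - (p + m), yL - p⟫ + ⟪θ - (p + m), (y - yL) - m⟫ := by
      rw [← inner_add_right]
      congr 1
      abel
    rw [key]
    have h1 : ⟪θ - (p + m), yL - p⟫ = 0 := by
      rw [real_inner_comm]
      exact (Submodule.mem_orthogonal _ _).1 hd _ (L.sub_mem hyL hpL)
    have h2 : ⟪θ - (p + m), (y - yL) - m⟫ = ⟪θ - m, (y - yL) - m⟫ := by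
      have hz : (y - yL) - m ∈ Lᗮ := Lᗮ.sub_mem hyO hmO
      have hrw : θ - (p + m) = (θ - m) - p := by abel
      rw [hrw, inner_sub_left, (Submodule.mem_orthogonal _ _).1 hz p hpL, sub_zero]
    rw [h1, h2, zero_add]
    exact hIvar _ ⟨hyC, hyO⟩
  -- uniqueness of projection
  have hCvar : ∀ y ∈ C, ⟪θ - PC θ, y - PC θ⟫ ≤ 0 := var_ineq hCconv hcC hcmin
  have h1 := hCvar _ huC
  have h2 := huvar _ hcC
  have e1 : ⟪θ - PC θ, (p + m) - PC θ⟫ - ⟪θ - (p + m), (p + m) - PC θ⟫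
      = ‖(p + m) - PC θ‖ ^ 2 := by
    rw [← inner_sub_left, ← real_inner_self_eq_norm_sq]
    congr 1
    abel
  have e2 : ⟪θ - (p + m), PC θ - (p + m)⟫ = -⟪θ - (p + m), (p + m) - PC θ⟫ := by
    rw [← inner_neg_right]
    congr 1
    abel
  rw [e2] at h2
  have h0 : ‖(p + m) - PC θ‖ = 0 := by nlinarith [norm_nonneg ((p + m) - PC θ)]
  exact (sub_eq_zero.1 (norm_eq_zero.1 h0)).symm
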